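/- Let α₁, α₂ be two real numbers of the same sign (α₁α₂ > 0) with α₁ ≠ α₂, and let E : ℝ² → ℝ² be the semi-skew linear operator E(x₁, x₂) := (α₂x₂, −α₁x₁). Then there is no function f : ℝ² → (−∞, ∞] which is upper semicontinuous at 0, satisfies f(0) ∈ ℝ, and solves the equation f(x) = f*(Ex) for all x ∈ ℝ², where f*(x*) := sup{⟨x*, x⟩ − f(x) : x ∈ ℝ²} is the convex conjugate of f. -/

import Mathlib

private lemma ereal_helper1 (x : EReal) (hx : x ≠ ⊥) (m C : ℝ)
    (h : ((m - C : ℝ) : EReal) ≤ x) : (m : EReal) - x ≤ (C : EReal) := by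
  induction x using EReal.rec with
  | bot => exact absurd rfl hx
  | coe y =>
      rw [EReal.coe_le_coe_iff] at h
      rw [← EReal.coe_sub, EReal.coe_le_coe_iff]
      linarith
  | top => simp

private lemma ereal_helper2 (x y : EReal) (c C : ℝ)
    (h1 : (c : EReal) - y ≤ x) (h2 : y ≤ (C : EReal)) :
    ((c - C : ℝ) : EReal) ≤ x := by
  refine le_trans ?_ h1
  rw [EReal.coe_sub]
  exact EReal.sub_le_sub le_rfl h2

/-- Let `α₁, α₂` be nonzero real numbers of the same sign with `α₁ ≠ α₂`, and let
`E(x₁, x₂) := (α₂x₂, −α₁x₁)` be the associated semi-skew operator on `ℝ²`. Then there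
is no function `f : ℝ² → (−∞, ∞]` which is upper semicontinuous at `0`, has
`f(0) ∈ ℝ`, and solves `f(x) = f*(Ex)` for all `x`, where
`f*(x*) = sup_x (⟨x*, x⟩ − f(x))` is the convex conjugate. -/
theorem stmt18 (α₁ α₂ : ℝ) (hsign : 0 < α₁ * α₂) (hne : α₁ ≠ α₂) :
    ¬ ∃ f : ℝ × ℝ → EReal,
      (∀ p : ℝ × ℝ, f p ≠ ⊥) ∧
      UpperSemicontinuousAt f (0 : ℝ × ℝ) ∧
      (∃ r : ℝ, f 0 = (r : EReal)) ∧
      (∀ p : ℝ × ℝ, f p = ⨆ q : ℝ × ℝ,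
        (((α₂ * p.2) * q.1 + (-(α₁ * p.1)) * q.2 : ℝ) : EReal) - f q) := by
  rintro ⟨f, hbot, husc, ⟨r, hf0⟩, hf⟩
  have hα₁ : α₁ ≠ 0 := fun h => by simp [h] at hsign
  have hα₂ : α₂ ≠ 0 := fun h => by simp [h] at hsign
  have hA : (0:ℝ) < |α₁| := abs_pos.2 hα₁
  have hB : (0:ℝ) < |α₂| := abs_pos.2 hα₂
  set C : ℝ := r + 1 with hC
  -- from upper semicontinuity, get a box around 0 on which f < C
  have h0lt : f 0 < ((C : ℝ) : EReal) := by
    rw [hf0]; exact_mod_cast lt_add_one r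
  have hev : ∀ᶠ x in nhds (0 : ℝ × ℝ), f x < ((C : ℝ) : EReal) := husc _ h0lt
  rw [Metric.eventually_nhds_iff] at hev
  obtain ⟨δ, hδ, hball⟩ := hev
  set d : ℝ := δ / 2 with hd'
  have hd : 0 < d := by positivity
  have hbox : ∀ p : ℝ × ℝ, |p.1| ≤ d → |p.2| ≤ d → f p < ((C : ℝ) : EReal) := by
    intro p h1 h2
    apply hball
    rw [Prod.dist_eq]
    have e1 : dist p.1 (0:ℝ×ℝ).1 = |p.1| := by simp [Real.dist_eq]
    have e2 : dist p.2 (0:ℝ×ℝ).2 = |p.2| := by simp [Real.dist_eq]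
    rw [e1, e2]
    apply max_lt <;> [skip; skip] <;> linarith
  set κ : ℝ := |α₂| / |α₁| with hκdef
  have hκ : 0 < κ := by positivity
  have hκA : κ * |α₁| = |α₂| := div_mul_cancel₀ _ hA.ne'
  have hκB : κ⁻¹ * |α₂| = |α₁| := by
    rw [hκdef, inv_div]
    exact div_mul_cancel₀ _ hB.ne'
  -- Fenchel inequality from the functional equation
  have F1 : ∀ p q : ℝ × ℝ,
      (((α₂ * p.2) * q.1 + (-(α₁ * p.1)) * q.2 : ℝ) : EReal) - f q ≤ f p := by
    intro p q
    rw [hf p]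
    exact le_iSup (fun q => (((α₂ * p.2) * q.1 + (-(α₁ * p.1)) * q.2 : ℝ) : EReal) - f q) q
  -- main induction : the box of boundedness stretches
  have main : ∀ n : ℕ, ∀ p : ℝ × ℝ,
      |p.1| ≤ d * κ ^ n → |p.2| ≤ d * κ⁻¹ ^ n → f p ≤ ((C : ℝ) : EReal) := by
    intro n
    induction n with
    | zero =>
        intro p h1 h2
        exact (hbox p (by simpa using h1) (by simpa using h2)).le
    | succ n ih =>
        intro p h1 h2
        rw [hf p]
        apply iSup_le
        intro q
        set x : ℝ × ℝ := (-(α₁ * p.1) / α₂, -(α₂ * p.2) / α₁) with hxdef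
        have hx1 : |x.1| ≤ d * κ ^ n := by
          have hx1' : |x.1| = |α₁ * p.1| / |α₂| := by
            rw [hxdef]; dsimp only; rw [abs_div, abs_neg]
          rw [hx1', div_le_iff₀ hB, abs_mul]
          calc |α₁| * |p.1| ≤ |α₁| * (d * κ ^ (n+1)) := by
                exact mul_le_mul_of_nonneg_left h1 hA.le
            _ = d * κ ^ n * (κ * |α₁|) := by rw [pow_succ]; ring
            _ = d * κ ^ n * |α₂| := by rw [hκA]
        have hx2 : |x.2| ≤ d * κ⁻¹ ^ n := by
          have hx2' : |x.2| = |α₂ * p.2| / |α₁| := by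
            rw [hxdef]; dsimp only; rw [abs_div, abs_neg]
          rw [hx2', div_le_iff₀ hA, abs_mul]
          calc |α₂| * |p.2| ≤ |α₂| * (d * κ⁻¹ ^ (n+1)) := by
                exact mul_le_mul_of_nonneg_left h2 hB.le
            _ = d * κ⁻¹ ^ n * (κ⁻¹ * |α₂|) := by rw [pow_succ]; ring
            _ = d * κ⁻¹ ^ n * |α₁| := by rw [hκB]
        have hfx : f x ≤ ((C : ℝ) : EReal) := ih x hx1 hx2
        have hc : (α₂ * q.2) * x.1 + (-(α₁ * q.1)) * x.2
            = (α₂ * p.2) * q.1 + (-(α₁ * p.1)) * q.2 := by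
          rw [hxdef]; dsimp only; field_simp; ring
        have key : ((((α₂ * p.2) * q.1 + (-(α₁ * p.1)) * q.2) - C : ℝ) : EReal) ≤ f q := by
          refine ereal_helper2 (f q) (f x) _ C ?_ hfx
          have := F1 q x
          rwa [hc] at this
        exact ereal_helper1 (f q) (hbot q) _ C key
  -- κ = 1 is impossible
  have hκne : κ ≠ 1 := by
    intro h
    have habs : |α₂| = |α₁| := by
      rw [hκdef, div_eq_one_iff_eq hA.ne'] at h
      linarith
    rcases abs_eq_abs.mp habs with h' | h'
    · exact hne h'.symm
    · rw [h'] at hsign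
      nlinarith [sq_nonneg α₁]
  -- the contradiction, in both cases
  rcases lt_or_gt_of_ne hκne with hκ1 | hκ1
  · -- κ < 1 : f ≤ C on the second axis, then f (d, 0) is huge
    have haxis : ∀ s : ℝ, f (0, s) ≤ ((C : ℝ) : EReal) := by
      intro s
      have hinv : 1 < κ⁻¹ := (one_lt_inv₀ hκ).2 hκ1
      obtain ⟨n, hn⟩ := pow_unbounded_of_one_lt (|s| / d) hinv
      refine main n (0, s) (by simpa using le_of_lt (by positivity : (0:ℝ) < d * κ ^ n)) ?_
      dsimp only
      rw [div_lt_iff₀ hd] at hn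
      linarith
    set s : ℝ := 2 * C / (-(α₁ * d)) with hsdef
    have hc : (α₂ * (d, (0:ℝ)).2) * ((0:ℝ), s).1 + (-(α₁ * (d, (0:ℝ)).1)) * ((0:ℝ), s).2
        = 2 * C := by
      dsimp only
      rw [hsdef]
      field_simp
      ring
    have hge : ((2 * C - C : ℝ) : EReal) ≤ f (d, 0) := by
      refine ereal_helper2 _ (f (0, s)) _ C ?_ (haxis s)
      have := F1 (d, 0) (0, s)
      rwa [hc] at this
    have hlt : f (d, 0) < ((C : ℝ) : EReal) :=
      hbox (d, 0) (by simp [abs_of_pos hd]) (by simp [hd.le])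
    have : ((2 * C - C : ℝ) : EReal) < ((C : ℝ) : EReal) := lt_of_le_of_lt hge hlt
    rw [EReal.coe_lt_coe_iff] at this
    linarith
  · -- κ > 1 : f ≤ C on the first axis, then f (0, d) is huge
    have haxis : ∀ t : ℝ, f (t, 0) ≤ ((C : ℝ) : EReal) := by
      intro t
      obtain ⟨n, hn⟩ := pow_unbounded_of_one_lt (|t| / d) hκ1
      refine main n (t, 0) ?_ (by simpa using le_of_lt (by positivity : (0:ℝ) < d * κ⁻¹ ^ n))
      dsimp only
      rw [div_lt_iff₀ hd] at hn
      linarith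
    set t : ℝ := 2 * C / (α₂ * d) with htdef
    have hc : (α₂ * ((0:ℝ), d).2) * (t, (0:ℝ)).1 + (-(α₁ * ((0:ℝ), d).1)) * (t, (0:ℝ)).2
        = 2 * C := by
      dsimp only
      rw [htdef]
      field_simp
      ring
    have hge : ((2 * C - C : ℝ) : EReal) ≤ f (0, d) := by
      refine ereal_helper2 _ (f (t, 0)) _ C ?_ (haxis t)
      have := F1 (0, d) (t, 0)
      rwa [hc] at this
    have hlt : f (0, d) < ((C : ℝ) : EReal) :=
      hbox (0, d) (by simp [hd.le]) (by simp [abs_of_pos hd])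
    have : ((2 * C - C : ℝ) : EReal) < ((C : ℝ) : EReal) := lt_of_le_of_lt hge hlt
    rw [EReal.coe_lt_coe_iff] at this
    linarith
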